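/- Consider regular 16-run designs with one four-level factor and three two-level factors (regular 4^1 2^{3-1} designs) of resolution at least III, represented by a two-dimensional subspace U of (ZMod 2)^4 together with vectors w_1, w_2, w_3 ∈ (ZMod 2)^4 that are pairwise distinct, do not belong to U, and such that U together with w_1, w_2, w_3 spans (ZMod 2)^4. Call two such designs isomorphic if there exist g ∈ GL(4, ZMod 2) and a permutation σ of {1, 2, 3} with g(U) = U' and g(w_i) = w'_{σ(i)} for all i. Then there are exactly 3 isomorphism classes of such designs. -/
import Mathlib

open Submodule Module

abbrev V4 : Type := Fin 4 → ZMod 2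

lemma addSelf {M : Type*} [AddCommGroup M] [Module (ZMod 2) M] (x : M) : x + x = 0 := by
  rw [← two_smul (ZMod 2), show (2 : ZMod 2) = 0 from rfl, zero_smul]

lemma add_eq_zero_iff_eq {M : Type*} [AddCommGroup M] [Module (ZMod 2) M] {a b : M} :
    a + b = 0 ↔ a = b := by
  constructor
  · intro h
    have : a + b + b = b := by rw [h, zero_add]
    rwa [add_assoc, addSelf, add_zero] at this
  · rintro rfl; exact addSelf a

noncomputable def E : Fin 4 → V4 := fun i => Pi.single i 1

noncomputable def U0 : Submodule (ZMod 2) V4 := span (ZMod 2) {E 0, E 1}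

lemma E_apply (i j : Fin 4) : E i j = if j = i then 1 else 0 := by
  simp [E, Pi.single_apply]

lemma mem_U0_iff (x : V4) : x ∈ U0 ↔ x 2 = 0 ∧ x 3 = 0 := by
  constructor
  · intro h
    obtain ⟨c, d, rfl⟩ := Submodule.mem_span_pair.1 h
    constructor <;> simp [E_apply]
  · rintro ⟨h2, h3⟩
    refine Submodule.mem_span_pair.2 ⟨x 0, x 1, ?_⟩
    funext j
    fin_cases j <;> simp [E_apply, h2, h3] <;> rfl

lemma range_two {α : Type*} (f : Fin 2 → α) : Set.range f = {f 0, f 1} := by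
  ext z
  constructor
  · rintro ⟨i, rfl⟩; fin_cases i <;> simp
  · rintro (rfl | rfl) <;> exact ⟨_, rfl⟩

lemma range_pair {α : Type*} (a b : α) : Set.range ![a, b] = {a, b} := by
  rw [range_two]; rfl

lemma range_four {α : Type*} (a b c d : α) :
    Set.range ![a, b, c, d] = {a, b, c, d} := by
  ext z
  constructor
  · rintro ⟨i, rfl⟩; fin_cases i <;> simp
  · rintro (rfl | rfl | rfl | rfl)
    · exact ⟨0, rfl⟩
    · exact ⟨1, rfl⟩
    · exact ⟨2, rfl⟩
    · exact ⟨3, rfl⟩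

lemma finrank_V4 : finrank (ZMod 2) V4 = 4 := Module.finrank_fin_fun (ZMod 2)

lemma E01_li : LinearIndependent (ZMod 2) ![E 0, E 1] := by
  rw [LinearIndependent.pair_iff]
  intro s t hst
  constructor
  · have := congrFun hst 0
    simpa [E_apply] using this
  · have := congrFun hst 1
    simpa [E_apply] using this

lemma finrank_U0' : finrank (ZMod 2) U0 = 2 := by
  have := finrank_span_eq_card E01_li
  rw [range_pair] at this
  rw [U0, this]
  simp

/-- A regular 16-run design with one four-level factor and `n` two-level factors
(a regular `4^1 2^{n-p}` design) of resolution at least III: a two-dimensional subspace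
`U` of `(ZMod 2)^4` together with pairwise distinct vectors `w i ∉ U` such that `U` and
the `w i` together span `(ZMod 2)^4`. -/
def FTLDesign (n : ℕ) : Type :=
  {Uw : Submodule (ZMod 2) (Fin 4 → ZMod 2) × (Fin n → Fin 4 → ZMod 2) //
    Module.finrank (ZMod 2) Uw.1 = 2 ∧
      Function.Injective Uw.2 ∧ (∀ i, Uw.2 i ∉ Uw.1) ∧
      Uw.1 ⊔ Submodule.span (ZMod 2) (Set.range Uw.2) = ⊤}

/-- Isomorphism of regular `4^1 2^{n-p}` designs: a linear automorphism `g` of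
`(ZMod 2)^4` with `g (U) = U'` together with a permutation `σ` of the two-level factors
with `g (w i) = w' (σ i)` for all `i`. -/
def FTLDesignIso {n : ℕ} (D D' : FTLDesign n) : Prop :=
  ∃ (g : (Fin 4 → ZMod 2) ≃ₗ[ZMod 2] (Fin 4 → ZMod 2)) (σ : Equiv.Perm (Fin n)),
    Submodule.map g.toLinearMap D.1.1 = D'.1.1 ∧ ∀ i, g (D.1.2 i) = D'.1.2 (σ i)

lemma top_le_of (w : Fin 3 → V4) (h2 : E 2 ∈ span (ZMod 2) (Set.range w))
    (h3 : E 3 ∈ span (ZMod 2) (Set.range w)) :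
    U0 ⊔ span (ZMod 2) (Set.range w) = ⊤ := by
  refine top_unique ?_
  rw [← (Pi.basisFun (ZMod 2) (Fin 4)).span_eq]
  refine span_le.2 ?_
  rintro x ⟨i, rfl⟩
  have hE : Pi.basisFun (ZMod 2) (Fin 4) i = E i := by simp [E]
  rw [hE]
  fin_cases i
  · exact Submodule.mem_sup_left (subset_span (by simp))
  · exact Submodule.mem_sup_left (subset_span (by simp))
  · exact Submodule.mem_sup_right h2
  · exact Submodule.mem_sup_right h3

noncomputable def R1 : FTLDesign 3 :=
  ⟨(U0, ![E 2, E 3, E 2 + E 3]), finrank_U0', by decide, by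
    intro i
    fin_cases i <;>
      · intro h
        rcases (mem_U0_iff _).1 h with ⟨h2, h3⟩
        revert h2 h3
        decide, by
    refine top_le_of _ (subset_span ⟨0, rfl⟩) (subset_span ⟨1, rfl⟩)⟩

noncomputable def R2 : FTLDesign 3 :=
  ⟨(U0, ![E 2, E 3, E 0 + E 2 + E 3]), finrank_U0', by decide, by
    intro i
    fin_cases i <;>
      · intro h
        rcases (mem_U0_iff _).1 h with ⟨h2, h3⟩
        revert h2 h3
        decide, by
    refine top_le_of _ (subset_span ⟨0, rfl⟩) (subset_span ⟨1, rfl⟩)⟩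

noncomputable def R3 : FTLDesign 3 :=
  ⟨(U0, ![E 2, E 0 + E 2, E 3]), finrank_U0', by decide, by
    intro i
    fin_cases i <;>
      · intro h
        rcases (mem_U0_iff _).1 h with ⟨h2, h3⟩
        revert h2 h3
        decide, by
    refine top_le_of _ (subset_span ⟨0, rfl⟩) (subset_span ⟨2, rfl⟩)⟩

lemma build (U : Submodule (ZMod 2) V4) (x y a b : V4)
    (hU : U = span (ZMod 2) {x, y})
    (htop : ⊤ ≤ span (ZMod 2) (Set.range ![x, y, a, b])) :
    ∃ g : V4 ≃ₗ[ZMod 2] V4,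
      Submodule.map g.toLinearMap U = U0 ∧ g x = E 0 ∧ g y = E 1 ∧ g a = E 2 ∧ g b = E 3 := by
  have hcard : Fintype.card (Fin 4) = finrank (ZMod 2) V4 := by
    rw [finrank_V4]; simp
  let B := basisOfTopLeSpanOfCardEqFinrank ![x, y, a, b] htop hcard
  let g := B.equiv (Pi.basisFun (ZMod 2) (Fin 4)) (Equiv.refl _)
  have hg : ∀ i : Fin 4, g (![x, y, a, b] i) = E i := by
    intro i
    have hB : B i = ![x, y, a, b] i := by
      rw [show (B : Fin 4 → V4) = ![x, y, a, b] from
        coe_basisOfTopLeSpanOfCardEqFinrank _ _ _]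
    rw [← hB]
    show B.equiv (Pi.basisFun (ZMod 2) (Fin 4)) (Equiv.refl _) (B i) = E i
    rw [Basis.equiv_apply]
    simp [E]
  have hgx : g x = E 0 := hg 0
  have hgy : g y = E 1 := hg 1
  have hga : g a = E 2 := hg 2
  have hgb : g b = E 3 := hg 3
  refine ⟨g, ?_, hgx, hgy, hga, hgb⟩
  rw [hU, Submodule.map_span]
  rw [Set.image_insert_eq, Set.image_singleton]
  show span (ZMod 2) {g x, g y} = U0
  rw [hgx, hgy, U0]

lemma zmod2_cases : ∀ u : ZMod 2, u = 0 ∨ u = 1 := by decide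

lemma exists_span_pair (U : Submodule (ZMod 2) V4) (hU : finrank (ZMod 2) U = 2) :
    ∃ x y, x ∈ U ∧ y ∈ U ∧ U = span (ZMod 2) {x, y} := by
  let b := finBasisOfFinrankEq (ZMod 2) U hU
  refine ⟨b 0, b 1, (b 0).2, (b 1).2, ?_⟩
  have hb : span (ZMod 2) (Set.range b) = (⊤ : Submodule (ZMod 2) U) := b.span_eq
  have h2 := congrArg (Submodule.map U.subtype) hb
  rw [Submodule.map_span, Submodule.map_subtype_top] at h2
  have him : (U.subtype '' Set.range b) = {(b 0 : V4), (b 1 : V4)} := by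
    rw [← Set.range_comp, range_two]; rfl
  rw [him] at h2
  exact h2.symm

lemma exists_span_pair_mem (U : Submodule (ZMod 2) V4) (hU : finrank (ZMod 2) U = 2)
    {x : V4} (hx : x ∈ U) (hx0 : x ≠ 0) :
    ∃ y ∈ U, U = span (ZMod 2) {x, y} := by
  obtain ⟨a, c, ha, hc, hUeq⟩ := exists_span_pair U hU
  have hx' : x ∈ span (ZMod 2) {a, c} := hUeq ▸ hx
  obtain ⟨s, t, hst⟩ := Submodule.mem_span_pair.1 hx'
  rcases zmod2_cases s with rfl | rfl
  · rcases zmod2_cases t with rfl | rfl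
    · exfalso; apply hx0; rw [← hst]; simp
    · have hxc : x = c := by rw [← hst]; simp
      refine ⟨a, ha, ?_⟩
      rw [hUeq, hxc, Set.pair_comm]
  · have hax : a = x + t • c := by
      rw [← hst, one_smul, add_assoc, addSelf, add_zero]
    refine ⟨c, hc, ?_⟩
    refine le_antisymm ?_ ?_
    · rw [hUeq]
      refine span_le.2 ?_
      rintro z (rfl | rfl)
      · rw [hax]
        exact add_mem (subset_span (by simp)) (smul_mem _ _ (subset_span (by simp)))
      · exact subset_span (by simp)
    · refine span_le.2 ?_
      rintro z (rfl | rfl)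
      · exact hx
      · exact hc

lemma sum_mem_caseA (U : Submodule (ZMod 2) V4) (w : Fin 3 → V4)
    (hU : finrank (ZMod 2) U = 2)
    (hw : ∀ i, w i ∉ U)
    (h01 : w 0 + w 1 ∉ U) (h02 : w 0 + w 2 ∉ U) (h12 : w 1 + w 2 ∉ U) :
    w 0 + w 1 + w 2 ∈ U := by
  set π := U.mkQ with hπ
  have hzero : ∀ x : V4, π x = 0 ↔ x ∈ U := by
    intro x
    rw [hπ, Submodule.mkQ_apply, Submodule.Quotient.mk_eq_zero]
  have hfr : finrank (ZMod 2) (V4 ⧸ U) = 2 := by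
    have h1 := U.finrank_quotient_add_finrank
    rw [finrank_V4, hU] at h1
    omega
  have li : LinearIndependent (ZMod 2) ![π (w 0), π (w 1)] := by
    rw [LinearIndependent.pair_iff]
    intro s t hst
    rcases zmod2_cases s with rfl | rfl <;> rcases zmod2_cases t with rfl | rfl
    · exact ⟨rfl, rfl⟩
    · exfalso; apply hw 1; rw [← hzero]
      simpa using hst
    · exfalso; apply hw 0; rw [← hzero]
      simpa using hst
    · exfalso; apply h01; rw [← hzero, map_add]
      simpa using hst
  have hspan : span (ZMod 2) {π (w 0), π (w 1)} = ⊤ := by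
    rw [← range_pair]
    apply eq_top_of_finrank_eq
    rw [finrank_span_eq_card li, hfr]
    simp
  have hmem : π (w 2) ∈ span (ZMod 2) {π (w 0), π (w 1)} := by
    rw [hspan]; trivial
  obtain ⟨s, t, hst⟩ := Submodule.mem_span_pair.1 hmem
  rcases zmod2_cases s with rfl | rfl <;> rcases zmod2_cases t with rfl | rfl
  · exfalso; apply hw 2; rw [← hzero]
    simpa using hst.symm
  · exfalso; apply h12; rw [← hzero, map_add]
    simp only [zero_smul, one_smul, zero_add] at hst
    rw [hst]
    exact addSelf _
  · exfalso; apply h02; rw [← hzero, map_add]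
    simp only [zero_smul, one_smul, add_zero] at hst
    rw [hst]
    exact addSelf _
  · rw [← hzero, map_add, map_add]
    simp only [one_smul] at hst
    rw [hst]
    exact addSelf _

lemma iso_inv {D D' : FTLDesign 3} (h : FTLDesignIso D D') :
    ((∑ i, D.1.2 i) = 0 ↔ (∑ i, D'.1.2 i) = 0) ∧
      ((∑ i, D.1.2 i) ∈ D.1.1 ↔ (∑ i, D'.1.2 i) ∈ D'.1.1) := by
  obtain ⟨g, σ, hmap, hg⟩ := h
  have hsum : g (∑ i, D.1.2 i) = ∑ i, D'.1.2 i := by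
    rw [map_sum]
    rw [Finset.sum_congr rfl (fun i _ => hg i)]
    exact Equiv.sum_comp σ _
  constructor
  · rw [← hsum]
    exact (LinearEquiv.map_eq_zero_iff g).symm
  · rw [← hmap, ← hsum]
    constructor
    · intro hm
      exact ⟨_, hm, rfl⟩
    · rintro ⟨z, hz, hze⟩
      have : z = ∑ i, D.1.2 i := g.injective hze
      rwa [← this]

lemma cover : ∀ i j k l : Fin 3, i ≠ j → i ≠ k → j ≠ k → l = i ∨ l = j ∨ l = k := by
  decide

noncomputable def mkPerm (i j k : Fin 3) (hij : i ≠ j) (hik : i ≠ k) (hjk : j ≠ k) : Equiv.Perm (Fin 3) :=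
  Equiv.ofBijective ![i, j, k] (by
    refine Finite.injective_iff_bijective.1 ?_
    intro a b hab
    fin_cases a <;> fin_cases b <;> simp_all)

lemma caseB {U : Submodule (ZMod 2) V4} {w : Fin 3 → V4}
    (hU : finrank (ZMod 2) U = 2) (hinj : Function.Injective w)
    (hw : ∀ i, w i ∉ U)
    (hsup : U ⊔ span (ZMod 2) (Set.range w) = ⊤)
    {i j k : Fin 3} (hij : i ≠ j) (hik : i ≠ k) (hjk : j ≠ k)
    (hm : w i + w j ∈ U) :
    FTLDesignIso ⟨(U, w), hU, hinj, hw, hsup⟩ R3 := by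
  have hu0 : w i + w j ≠ 0 := fun h => hinj.ne hij (add_eq_zero_iff_eq.1 h)
  obtain ⟨y, hyU, hUeq⟩ := exists_span_pair_mem U hU hm hu0
  have hwj : w j = w i + (w i + w j) := by
    rw [← add_assoc, addSelf, zero_add]
  have htop : ⊤ ≤ span (ZMod 2) (Set.range ![w i + w j, y, w i, w k]) := by
    rw [range_four, ← hsup]
    refine sup_le ?_ (span_le.2 ?_)
    · rw [hUeq]
      refine span_mono ?_
      intro z hz
      simp only [Set.mem_insert_iff, Set.mem_singleton_iff] at hz ⊢
      tauto
    · rintro t ⟨l, rfl⟩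
      rcases cover i j k l hij hik hjk with h | h | h <;> rw [h]
      · exact subset_span (by simp)
      · have m1 : w i ∈ span (ZMod 2) ({w i + w j, y, w i, w k} : Set V4) :=
          subset_span (by simp)
        have m2 : w i + w j ∈ span (ZMod 2) ({w i + w j, y, w i, w k} : Set V4) :=
          subset_span (by simp)
        have hmem := add_mem m1 m2
        rwa [← hwj] at hmem
      · exact subset_span (by simp)
  obtain ⟨g, hmap, hgx, hgy, hga, hgb⟩ := build U (w i + w j) y (w i) (w k) hUeq htop
  refine ⟨g, (mkPerm i j k hij hik hjk).symm, hmap, ?_⟩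
  intro l
  rcases cover i j k l hij hik hjk with h | h | h <;> rw [h]
  · have hσ : (mkPerm i j k hij hik hjk).symm i = 0 := by
      rw [Equiv.symm_apply_eq]; rfl
    rw [hσ]
    exact hga
  · have hσ : (mkPerm i j k hij hik hjk).symm j = 1 := by
      rw [Equiv.symm_apply_eq]; rfl
    rw [hσ]
    show g (w j) = E 0 + E 2
    rw [hwj, map_add, hga, hgx, add_comm]
  · have hσ : (mkPerm i j k hij hik hjk).symm k = 2 := by
      rw [Equiv.symm_apply_eq]; rfl
    rw [hσ]
    exact hgb

lemma sum1 : (∑ i, R1.1.2 i) = 0 := by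
  rw [Fin.sum_univ_three]
  exact addSelf _

lemma sum2 : (∑ i, R2.1.2 i) = E 0 := by
  rw [Fin.sum_univ_three]
  show E 2 + E 3 + (E 0 + E 2 + E 3) = E 0
  have h : E 2 + E 3 + (E 0 + E 2 + E 3) = E 0 + ((E 2 + E 2) + (E 3 + E 3)) := by abel
  rw [h, addSelf, addSelf, add_zero, add_zero]

lemma sum3 : (∑ i, R3.1.2 i) = E 0 + E 3 := by
  rw [Fin.sum_univ_three]
  show E 2 + (E 0 + E 2) + E 3 = E 0 + E 3
  have h : E 2 + (E 0 + E 2) + E 3 = (E 0 + E 3) + (E 2 + E 2) := by abel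
  rw [h, addSelf, add_zero]

lemma hE0ne : E 0 ≠ (0 : V4) := by decide

lemma hE03ne : E 0 + E 3 ≠ (0 : V4) := by decide

lemma hE0mem : E 0 ∈ U0 := (mem_U0_iff _).2 ⟨by decide, by decide⟩

lemma hE03mem : E 0 + E 3 ∉ U0 := fun h => absurd ((mem_U0_iff _).1 h).2 (by decide)

/-- There are exactly 3 isomorphism classes of regular 16-run `4^1 2^{3-1}` designs of
resolution at least III: there are 3 designs such that every design is isomorphic to
exactly one of them. -/
theorem three_isoClasses_of_four_one_two_three :
    ∃ reps : Fin 3 → FTLDesign 3,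
      ∀ D : FTLDesign 3, ∃! j : Fin 3, FTLDesignIso D (reps j) := by
  refine ⟨![R1, R2, R3], fun D => ?_⟩
  obtain ⟨j, hj⟩ : ∃ j : Fin 3, FTLDesignIso D (![R1, R2, R3] j) := by
    obtain ⟨⟨U, w⟩, hU, hinj, hw, hsup⟩ := D
    by_cases h01 : w 0 + w 1 ∈ U
    · exact ⟨2, caseB hU hinj hw hsup (i := 0) (j := 1) (k := 2)
        (by decide) (by decide) (by decide) h01⟩
    by_cases h02 : w 0 + w 2 ∈ U
    · exact ⟨2, caseB hU hinj hw hsup (i := 0) (j := 2) (k := 1)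
        (by decide) (by decide) (by decide) h02⟩
    by_cases h12 : w 1 + w 2 ∈ U
    · exact ⟨2, caseB hU hinj hw hsup (i := 1) (j := 2) (k := 0)
        (by decide) (by decide) (by decide) h12⟩
    have hs : w 0 + w 1 + w 2 ∈ U := sum_mem_caseA U w hU hw h01 h02 h12
    by_cases hs0 : w 0 + w 1 + w 2 = 0
    · refine ⟨0, ?_⟩
      obtain ⟨x, y, hx, hy, hUeq⟩ := exists_span_pair U hU
      have hw2 : w 2 = w 0 + w 1 := by
        have := add_eq_zero_iff_eq.1 hs0
        exact this.symm
      have htop : ⊤ ≤ span (ZMod 2) (Set.range ![x, y, w 0, w 1]) := by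
        rw [range_four, ← hsup]
        refine sup_le ?_ (span_le.2 ?_)
        · rw [hUeq]
          refine span_mono ?_
          intro z hz
          simp only [Set.mem_insert_iff, Set.mem_singleton_iff] at hz ⊢
          tauto
        · rintro t ⟨l, rfl⟩
          fin_cases l
          · exact subset_span (by simp)
          · exact subset_span (by simp)
          · show w 2 ∈ _
            rw [hw2]
            exact add_mem (subset_span (by simp)) (subset_span (by simp))
      obtain ⟨g, hmap, hgx, hgy, hga, hgb⟩ := build U x y (w 0) (w 1) hUeq htop
      refine ⟨g, 1, hmap, ?_⟩
      intro l
      fin_cases l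
      · exact hga
      · exact hgb
      · show g (w 2) = E 2 + E 3
        rw [hw2, map_add, hga, hgb]
    · refine ⟨1, ?_⟩
      obtain ⟨y, hyU, hUeq⟩ := exists_span_pair_mem U hU hs hs0
      have hw2 : w 2 = w 0 + w 1 + w 2 + w 0 + w 1 := by
        have h : w 0 + w 1 + w 2 + w 0 + w 1 = w 0 + w 0 + (w 1 + w 1) + w 2 := by abel
        rw [h, addSelf, addSelf, add_zero, zero_add]
      have htop : ⊤ ≤ span (ZMod 2) (Set.range ![w 0 + w 1 + w 2, y, w 0, w 1]) := by
        rw [range_four, ← hsup]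
        refine sup_le ?_ (span_le.2 ?_)
        · rw [hUeq]
          refine span_mono ?_
          intro z hz
          simp only [Set.mem_insert_iff, Set.mem_singleton_iff] at hz ⊢
          tauto
        · rintro t ⟨l, rfl⟩
          fin_cases l
          · exact subset_span (by simp)
          · exact subset_span (by simp)
          · have m1 : w 0 + w 1 + w 2 ∈ span (ZMod 2)
                ({w 0 + w 1 + w 2, y, w 0, w 1} : Set V4) := subset_span (by simp)
            have m2 : w 0 ∈ span (ZMod 2)
                ({w 0 + w 1 + w 2, y, w 0, w 1} : Set V4) := subset_span (by simp)
            have m3 : w 1 ∈ span (ZMod 2)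
                ({w 0 + w 1 + w 2, y, w 0, w 1} : Set V4) := subset_span (by simp)
            have hmem := add_mem (add_mem m1 m2) m3
            rwa [← hw2] at hmem
      obtain ⟨g, hmap, hgx, hgy, hga, hgb⟩ :=
        build U (w 0 + w 1 + w 2) y (w 0) (w 1) hUeq htop
      refine ⟨g, 1, hmap, ?_⟩
      intro l
      fin_cases l
      · exact hga
      · exact hgb
      · show g (w 2) = E 0 + E 2 + E 3
        have step : g (w 2) = g (w 0 + w 1 + w 2) + g (w 0) + g (w 1) := by
          rw [← map_add, ← map_add, ← hw2]
        rw [step, hgx, hga, hgb]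
  refine ⟨j, hj, fun k hk => ?_⟩
  have e1 := (iso_inv hk).1.symm.trans (iso_inv hj).1
  have e2 := (iso_inv hk).2.symm.trans (iso_inv hj).2
  fin_cases j <;> fin_cases k
  · rfl
  · exact absurd (Eq.trans sum2.symm (e1.2 sum1)) hE0ne
  · exact absurd (Eq.trans sum3.symm (e1.2 sum1)) hE03ne
  · exact absurd (Eq.trans sum2.symm (e1.1 sum1)) hE0ne
  · rfl
  · exact absurd (sum3 ▸ e2.2 (sum2 ▸ hE0mem : (∑ i, R2.1.2 i) ∈ U0)) hE03mem
  · exact absurd (Eq.trans sum3.symm (e1.1 sum1)) hE03ne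
  · exact absurd (sum3 ▸ e2.1 (sum2 ▸ hE0mem : (∑ i, R2.1.2 i) ∈ U0)) hE03mem
  · rfl
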